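/- arXiv:1801.07661 — 3 statements merged into one kernel-verified Lean document; each statement's English description precedes it below -/
import Mathlib

section
/- Define γ(t,x) = γ₁(t,x) + γ₂(t,x), where γ₁(t,x) = ∫₀^t (1+s)^{-(x+1)} · e^{-1/(1+s)} ds and γ₂(t,x) = ∫₀^t (1+s)^{x-1} · e^{-(1+s)} ds (real powers). Then there exists a constant C > 0 such that for every real τ ≥ 0 and all t₁, t₂ ≥ C·2^τ, one has Σ_{n=1}^∞ 2^{-n} · min( sup_{x ∈ [1,n]} |γ(t₁,x) − γ(t₂,x)| , 1 ) < 2^{-τ}. -/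
open Real

/-- `γ₁(t,x) = ∫₀ᵗ (1+s)^{-(x+1)} · e^{-1/(1+s)} ds`. -/
noncomputable def gamma1 (t x : ℝ) : ℝ :=
  ∫ s in (0 : ℝ)..t, (1 + s) ^ (-(x + 1)) * Real.exp (-(1 / (1 + s)))

/-- `γ₂(t,x) = ∫₀ᵗ (1+s)^{x-1} · e^{-(1+s)} ds`. -/
noncomputable def gamma2 (t x : ℝ) : ℝ :=
  ∫ s in (0 : ℝ)..t, (1 + s) ^ (x - 1) * Real.exp (-(1 + s))

/-- `γ = γ₁ + γ₂`. -/
noncomputable def gammaStream (t x : ℝ) : ℝ := gamma1 t x + gamma2 t x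

lemma contOn1 (x : ℝ) :
    ContinuousOn (fun s : ℝ => (1 + s) ^ (-(x + 1)) * Real.exp (-(1 / (1 + s)))) (Set.Ici 0) := by
  intro s hs
  have h0 : (1 : ℝ) + s ≠ 0 := by simp only [Set.mem_Ici] at hs; nlinarith
  have hc : ContinuousAt (fun s : ℝ => 1 + s) s := by fun_prop
  exact ((hc.rpow_const (Or.inl h0)).mul
    (((continuousAt_const.div hc h0).neg).rexp)).continuousWithinAt

lemma contOn2 (x : ℝ) :
    ContinuousOn (fun s : ℝ => (1 + s) ^ (x - 1) * Real.exp (-(1 + s))) (Set.Ici 0) := by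
  intro s hs
  have h0 : (1 : ℝ) + s ≠ 0 := by simp only [Set.mem_Ici] at hs; nlinarith
  have hc : ContinuousAt (fun s : ℝ => 1 + s) s := by fun_prop
  exact ((hc.rpow_const (Or.inl h0)).mul (hc.neg.rexp)).continuousWithinAt

lemma int_inv_sq (a b : ℝ) (ha : 0 ≤ a) (hab : a ≤ b) :
    ∫ s in a..b, ((1 + s) ^ 2)⁻¹ = (1 + a)⁻¹ - (1 + b)⁻¹ := by
  have hd : ∀ s ∈ Set.uIcc a b, HasDerivAt (fun u : ℝ => -(1 + u)⁻¹) ((1 + s) ^ 2)⁻¹ s := by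
    intro s hs
    rw [Set.uIcc_of_le hab] at hs
    have h0 : (1 : ℝ) + s ≠ 0 := by nlinarith [hs.1]
    have h := (((hasDerivAt_id s).const_add 1).inv h0).neg
    refine h.congr_deriv ?_
    simp only [id]; field_simp
  have hint : IntervalIntegrable (fun s : ℝ => ((1 + s) ^ 2)⁻¹) MeasureTheory.volume a b := by
    apply ContinuousOn.intervalIntegrable
    intro s hs
    rw [Set.uIcc_of_le hab] at hs
    have h0 : ((1 : ℝ) + s) ≠ 0 := by nlinarith [hs.1]
    exact ((((continuous_const.add continuous_id).continuousAt (x := s)).pow 2).inv₀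
      (pow_ne_zero 2 h0)).continuousWithinAt
  rw [intervalIntegral.integral_eq_sub_of_hasDerivAt hd hint]
  ring

lemma int_exp_half (a b : ℝ) :
    ∫ s in a..b, Real.exp (-(1 + s) / 2) = 2 * Real.exp (-(1 + a) / 2) - 2 * Real.exp (-(1 + b) / 2) := by
  have hd : ∀ s ∈ Set.uIcc a b,
      HasDerivAt (fun u : ℝ => -2 * Real.exp (-(1 + u) / 2)) (Real.exp (-(1 + s) / 2)) s := by
    intro s _
    have h := ((((hasDerivAt_id s).const_add 1).neg.div_const 2).exp).const_mul (-2 : ℝ)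
    refine h.congr_deriv ?_
    simp [id]
    ring_nf
  have hint : IntervalIntegrable (fun s : ℝ => Real.exp (-(1 + s) / 2)) MeasureTheory.volume a b := by
    apply Continuous.intervalIntegrable; fun_prop
  rw [intervalIntegral.integral_eq_sub_of_hasDerivAt hd hint]
  ring

lemma aux_sq (τ : ℝ) (hτ : 0 ≤ τ) : (τ + 2) ^ 2 ≤ 25 * (2 : ℝ) ^ τ := by
  have h2 : (2 : ℝ) ^ τ = Real.exp (Real.log 2 * τ) := Real.rpow_def_of_pos two_pos τ
  have hlog : (0.6931 : ℝ) ≤ Real.log 2 := by linarith [Real.log_two_gt_d9]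
  have h3 : Real.log 2 * τ / 2 + 1 ≤ Real.exp (Real.log 2 * τ / 2) := Real.add_one_le_exp _
  have h4 : Real.exp (Real.log 2 * τ) = (Real.exp (Real.log 2 * τ / 2)) ^ 2 := by
    rw [← Real.exp_nat_mul]; ring_nf
  rw [h2, h4]
  have h5 : (0:ℝ) ≤ Real.log 2 * τ / 2 + 1 := by nlinarith
  have h6 : τ + 2 ≤ 5 * (Real.log 2 * τ / 2 + 1) := by nlinarith
  have h7 : (τ + 2) ^ 2 ≤ (5 * (Real.log 2 * τ / 2 + 1)) ^ 2 :=
    pow_le_pow_left₀ (by linarith) h6 2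
  have h8 : (Real.log 2 * τ / 2 + 1) ^ 2 ≤ (Real.exp (Real.log 2 * τ / 2)) ^ 2 :=
    pow_le_pow_left₀ h5 h3 2
  nlinarith

lemma log_le_two_sqrt (u : ℝ) (hu : 1 ≤ u) : Real.log u ≤ 2 * Real.sqrt u := by
  have h0 : (0:ℝ) < Real.sqrt u := Real.sqrt_pos.2 (by linarith)
  have h1 : Real.log (Real.sqrt u) ≤ Real.sqrt u - 1 := Real.log_le_sub_one_of_pos h0
  have h2 : Real.log (Real.sqrt u) = Real.log u / 2 := Real.log_sqrt (by linarith)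
  nlinarith

lemma rpow_le_exp_half (τ x u : ℝ) (hτ : 0 ≤ τ) (hx1 : 1 ≤ x) (hx2 : x ≤ τ + 3)
    (hu : 400 * (2:ℝ) ^ τ ≤ u) : u ^ (x - 1) ≤ Real.exp (u / 2) := by
  have hsq := aux_sq τ hτ
  have hτ2 : (0:ℝ) ≤ τ + 2 := by linarith
  have hu16 : 16 * (τ + 2) ^ 2 ≤ u := by nlinarith
  have hu1 : (1:ℝ) ≤ u := by nlinarith
  have hupos : (0:ℝ) < u := by linarith
  have hsqrt : 4 * (τ + 2) ≤ Real.sqrt u := by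
    have : Real.sqrt (16 * (τ + 2) ^ 2) ≤ Real.sqrt u := Real.sqrt_le_sqrt hu16
    have he : Real.sqrt (16 * (τ + 2) ^ 2) = 4 * (τ + 2) := by
      rw [show (16:ℝ) * (τ + 2) ^ 2 = (4 * (τ + 2)) ^ 2 by ring]
      exact Real.sqrt_sq (by linarith)
    linarith [he ▸ this]
  have hlog : Real.log u ≤ 2 * Real.sqrt u := log_le_two_sqrt u hu1
  have hlognn : 0 ≤ Real.log u := Real.log_nonneg hu1
  have hkey : (x - 1) * Real.log u ≤ u / 2 := by
    have h1 : (x - 1) * Real.log u ≤ (τ + 2) * (2 * Real.sqrt u) := by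
      have hs : 0 ≤ Real.sqrt u := Real.sqrt_nonneg u
      nlinarith
    have h2 : (τ + 2) * (2 * Real.sqrt u) ≤ (Real.sqrt u / 4) * (2 * Real.sqrt u) := by
      nlinarith [Real.sqrt_nonneg u]
    have h3 : (Real.sqrt u / 4) * (2 * Real.sqrt u) = u / 2 := by
      have := Real.sq_sqrt (le_of_lt hupos)
      nlinarith
    linarith
  calc u ^ (x - 1) = Real.exp (Real.log u * (x - 1)) := Real.rpow_def_of_pos hupos _
    _ ≤ Real.exp (u / 2) := by rw [Real.exp_le_exp]; nlinarith

lemma key_est (τ x t₁ t₂ : ℝ) (hτ : 0 ≤ τ) (hx1 : 1 ≤ x) (hx2 : x ≤ τ + 3)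
    (h2 : 500 * (2:ℝ) ^ τ ≤ t₂) (h12 : t₂ ≤ t₁) :
    |gammaStream t₁ x - gammaStream t₂ x| ≤ (2:ℝ) ^ (-τ) / 2 := by
  set T : ℝ := 500 * (2:ℝ) ^ τ with hT
  have hrp : (1:ℝ) ≤ (2:ℝ) ^ τ := by
    have := Real.rpow_le_rpow_of_exponent_le (x := (2:ℝ)) one_le_two hτ
    simpa using this
  have hT500 : (500:ℝ) ≤ T := by nlinarith
  have ht₂ : (0:ℝ) < t₂ := by linarith
  have ht₁ : (0:ℝ) < t₁ := by linarith
  -- integrability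
  have hi1 : ∀ t : ℝ, 0 ≤ t → IntervalIntegrable
      (fun s : ℝ => (1 + s) ^ (-(x + 1)) * Real.exp (-(1 / (1 + s)))) MeasureTheory.volume 0 t :=
    fun t ht => ((contOn1 x).mono (by rw [Set.uIcc_of_le ht]; exact Set.Icc_subset_Ici_self)).intervalIntegrable
  have hi2 : ∀ t : ℝ, 0 ≤ t → IntervalIntegrable
      (fun s : ℝ => (1 + s) ^ (x - 1) * Real.exp (-(1 + s))) MeasureTheory.volume 0 t :=
    fun t ht => ((contOn2 x).mono (by rw [Set.uIcc_of_le ht]; exact Set.Icc_subset_Ici_self)).intervalIntegrable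
  have hd1 : gamma1 t₁ x - gamma1 t₂ x
      = ∫ s in t₂..t₁, (1 + s) ^ (-(x + 1)) * Real.exp (-(1 / (1 + s))) :=
    intervalIntegral.integral_interval_sub_left (hi1 t₁ ht₁.le) (hi1 t₂ ht₂.le)
  have hd2 : gamma2 t₁ x - gamma2 t₂ x
      = ∫ s in t₂..t₁, (1 + s) ^ (x - 1) * Real.exp (-(1 + s)) :=
    intervalIntegral.integral_interval_sub_left (hi2 t₁ ht₁.le) (hi2 t₂ ht₂.le)
  -- integrability on [t₂, t₁]
  have hsub : Set.uIcc t₂ t₁ ⊆ Set.Ici (0:ℝ) := by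
    rw [Set.uIcc_of_le h12]
    exact fun s hs => le_trans ht₂.le hs.1
  have hj1 : IntervalIntegrable (fun s : ℝ => (1 + s) ^ (-(x + 1)) * Real.exp (-(1 / (1 + s))))
      MeasureTheory.volume t₂ t₁ := ((contOn1 x).mono hsub).intervalIntegrable
  have hj2 : IntervalIntegrable (fun s : ℝ => (1 + s) ^ (x - 1) * Real.exp (-(1 + s)))
      MeasureTheory.volume t₂ t₁ := ((contOn2 x).mono hsub).intervalIntegrable
  -- bound for first integral
  have hb1 : |∫ s in t₂..t₁, (1 + s) ^ (-(x + 1)) * Real.exp (-(1 / (1 + s)))| ≤ (1 + t₂)⁻¹ := by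
    have habs := intervalIntegral.abs_integral_le_integral_abs (f := fun s : ℝ =>
      (1 + s) ^ (-(x + 1)) * Real.exp (-(1 / (1 + s)))) (μ := MeasureTheory.volume) h12
    have hmono : ∫ s in t₂..t₁, |(1 + s) ^ (-(x + 1)) * Real.exp (-(1 / (1 + s)))|
        ≤ ∫ s in t₂..t₁, ((1 + s) ^ 2)⁻¹ := by
      apply intervalIntegral.integral_mono_on h12 hj1.abs
      · apply ContinuousOn.intervalIntegrable
        intro s hs
        have h0 : ((1 : ℝ) + s) ≠ 0 := by
          have := hsub hs; simp only [Set.mem_Ici] at this; nlinarith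
        exact ((((continuous_const.add continuous_id).continuousAt (x := s)).pow 2).inv₀
          (pow_ne_zero 2 h0)).continuousWithinAt
      · intro s hs
        have hs0 : 0 ≤ s := le_trans ht₂.le hs.1
        have h1s : (1:ℝ) ≤ 1 + s := by linarith
        have h1 : (1 + s) ^ (-(x + 1)) ≤ (1 + s) ^ (-(2:ℝ)) :=
          Real.rpow_le_rpow_of_exponent_le h1s (by linarith)
        have h2 : (1 + s) ^ (-(2:ℝ)) = ((1 + s) ^ 2)⁻¹ := by
          rw [Real.rpow_neg (by linarith), show ((2:ℝ)) = ((2:ℕ):ℝ) by norm_num,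
            Real.rpow_natCast]
        have hexp : Real.exp (-(1 / (1 + s))) ≤ 1 := by
          rw [Real.exp_le_one_iff]
          have : (0:ℝ) ≤ 1 / (1 + s) := by positivity
          linarith
        have hnn : (0:ℝ) ≤ (1 + s) ^ (-(x + 1)) := Real.rpow_nonneg (by linarith) _
        rw [abs_of_nonneg (by positivity)]
        calc (1 + s) ^ (-(x + 1)) * Real.exp (-(1 / (1 + s)))
            ≤ (1 + s) ^ (-(x + 1)) * 1 := by
              exact mul_le_mul_of_nonneg_left hexp hnn
          _ = (1 + s) ^ (-(x + 1)) := by ring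
          _ ≤ (1 + s) ^ (-(2:ℝ)) := h1
          _ = ((1 + s) ^ 2)⁻¹ := h2
    have hval : ∫ s in t₂..t₁, ((1 + s) ^ 2)⁻¹ = (1 + t₂)⁻¹ - (1 + t₁)⁻¹ :=
      int_inv_sq t₂ t₁ ht₂.le h12
    have hpos : (0:ℝ) < (1 + t₁)⁻¹ := by positivity
    linarith [habs, hmono]
  -- bound for second integral
  have hb2 : |∫ s in t₂..t₁, (1 + s) ^ (x - 1) * Real.exp (-(1 + s))| ≤ 2 * Real.exp (-(1 + t₂) / 2) := by
    have habs := intervalIntegral.abs_integral_le_integral_abs (f := fun s : ℝ =>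
      (1 + s) ^ (x - 1) * Real.exp (-(1 + s))) (μ := MeasureTheory.volume) h12
    have hmono : ∫ s in t₂..t₁, |(1 + s) ^ (x - 1) * Real.exp (-(1 + s))|
        ≤ ∫ s in t₂..t₁, Real.exp (-(1 + s) / 2) := by
      apply intervalIntegral.integral_mono_on h12 hj2.abs
      · exact (Continuous.intervalIntegrable (by fun_prop) _ _)
      · intro s hs
        have hu : 400 * (2:ℝ) ^ τ ≤ 1 + s := by nlinarith [hs.1]
        have hpow : (1 + s) ^ (x - 1) ≤ Real.exp ((1 + s) / 2) :=
          rpow_le_exp_half τ x (1 + s) hτ hx1 hx2 hu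
        have hnn : (0:ℝ) ≤ (1 + s) ^ (x - 1) := Real.rpow_nonneg (by nlinarith [hs.1]) _
        rw [abs_of_nonneg (by positivity)]
        calc (1 + s) ^ (x - 1) * Real.exp (-(1 + s))
            ≤ Real.exp ((1 + s) / 2) * Real.exp (-(1 + s)) := by
              exact mul_le_mul_of_nonneg_right hpow (Real.exp_pos _).le
          _ = Real.exp (-(1 + s) / 2) := by rw [← Real.exp_add]; ring_nf
    have hval := int_exp_half t₂ t₁
    have hpos : (0:ℝ) < Real.exp (-(1 + t₁) / 2) := Real.exp_pos _
    linarith [habs, hmono, hval ▸ hmono]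
  -- combine
  have hp : (0:ℝ) < (2:ℝ) ^ τ := Real.rpow_pos_of_pos two_pos τ
  have h1t : (0:ℝ) < 1 + t₂ := by linarith
  have hexp_small : Real.exp (-(1 + t₂) / 2) ≤ 2 / (1 + t₂) := by
    have hw : (0:ℝ) < (1 + t₂) / 2 := by linarith
    have h1 : (1 + t₂) / 2 ≤ Real.exp ((1 + t₂) / 2) := by
      linarith [Real.add_one_le_exp ((1 + t₂) / 2)]
    have h2e : Real.exp (-(1 + t₂) / 2) = (Real.exp ((1 + t₂) / 2))⁻¹ := by
      rw [← Real.exp_neg]; ring_nf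
    rw [h2e, show (2:ℝ) / (1 + t₂) = ((1 + t₂) / 2)⁻¹ by field_simp]
    exact inv_anti₀ hw h1
  have hA : (1 + t₂)⁻¹ ≤ (2:ℝ) ^ (-τ) / 500 := by
    have h1 : (1 + t₂)⁻¹ ≤ (500 * (2:ℝ) ^ τ)⁻¹ := by
      apply inv_anti₀ (by positivity)
      linarith
    have h2' : (500 * (2:ℝ) ^ τ)⁻¹ = (2:ℝ) ^ (-τ) / 500 := by
      rw [Real.rpow_neg (by norm_num : (0:ℝ) ≤ 2), mul_inv]
      ring
    linarith [h2' ▸ h1]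
  have hsplit : gammaStream t₁ x - gammaStream t₂ x
      = (gamma1 t₁ x - gamma1 t₂ x) + (gamma2 t₁ x - gamma2 t₂ x) := by
    simp [gammaStream]; ring
  have htot : |gammaStream t₁ x - gammaStream t₂ x|
      ≤ (1 + t₂)⁻¹ + 2 * Real.exp (-(1 + t₂) / 2) := by
    rw [hsplit]
    calc |(gamma1 t₁ x - gamma1 t₂ x) + (gamma2 t₁ x - gamma2 t₂ x)|
        ≤ |gamma1 t₁ x - gamma1 t₂ x| + |gamma2 t₁ x - gamma2 t₂ x| := abs_add_le _ _
      _ ≤ (1 + t₂)⁻¹ + 2 * Real.exp (-(1 + t₂) / 2) := by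
          rw [hd1, hd2]; exact add_le_add hb1 hb2
  have hrpneg : (0:ℝ) < (2:ℝ) ^ (-τ) := Real.rpow_pos_of_pos two_pos _
  have hB : 2 * Real.exp (-(1 + t₂) / 2) ≤ 4 * ((2:ℝ) ^ (-τ) / 500) := by
    have : (2:ℝ) / (1 + t₂) = 2 * (1 + t₂)⁻¹ := by ring
    nlinarith [hexp_small, hA]
  linarith

lemma key_est' (τ x t₁ t₂ : ℝ) (hτ : 0 ≤ τ) (hx1 : 1 ≤ x) (hx2 : x ≤ τ + 3)
    (h1 : 500 * (2:ℝ) ^ τ ≤ t₁) (h2 : 500 * (2:ℝ) ^ τ ≤ t₂) :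
    |gammaStream t₁ x - gammaStream t₂ x| ≤ (2:ℝ) ^ (-τ) / 2 := by
  rcases le_total t₂ t₁ with h | h
  · exact key_est τ x t₁ t₂ hτ hx1 hx2 h2 h
  · rw [abs_sub_comm]; exact key_est τ x t₂ t₁ hτ hx1 hx2 h1 h

/-- There is a constant `C > 0` such that `γ` is a `T`-convergent
Cauchy stream for `T(τ) = C·2^τ`, with respect to the metric
`d(g,h) = Σ_{n≥1} 2^{-n} · min(sup_{x ∈ [1,n]} |g(x) − h(x)|, 1)`. -/
theorem gammaStream_effective_cauchy :
    ∃ C : ℝ, 0 < C ∧ ∀ τ : ℝ, 0 ≤ τ → ∀ t₁ t₂ : ℝ,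
      C * (2 : ℝ) ^ τ ≤ t₁ → C * (2 : ℝ) ^ τ ≤ t₂ →
      (∑' n : ℕ, (2 : ℝ) ^ (-((n : ℤ) + 1)) *
        min (sSup ((fun x => |gammaStream t₁ x - gammaStream t₂ x|) ''
          Set.Icc (1 : ℝ) ((n : ℝ) + 1))) 1) < (2 : ℝ) ^ (-τ) := by
  refine ⟨500, by norm_num, fun τ hτ t₁ t₂ h1 h2 => ?_⟩
  set f : ℕ → ℝ := fun n => (2 : ℝ) ^ (-((n : ℤ) + 1)) *
    min (sSup ((fun x => |gammaStream t₁ x - gammaStream t₂ x|) ''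
      Set.Icc (1 : ℝ) ((n : ℝ) + 1))) 1 with hf
  have hzp : ∀ n : ℕ, (2 : ℝ) ^ (-((n : ℤ) + 1)) = (1/2 : ℝ) ^ (n + 1) := by
    intro n
    rw [show (-((n : ℤ) + 1)) = -(((n+1 : ℕ) : ℤ)) by push_cast; ring,
      zpow_neg, zpow_natCast, one_div, inv_pow]
  have hS0 : ∀ n : ℕ, 0 ≤ min (sSup ((fun x => |gammaStream t₁ x - gammaStream t₂ x|) ''
      Set.Icc (1 : ℝ) ((n : ℝ) + 1))) 1 := by
    intro n
    exact le_min (Real.sSup_nonneg (by rintro y ⟨x, -, rfl⟩; exact abs_nonneg _)) zero_le_one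
  have hg : Summable (fun n : ℕ => (1/2 : ℝ) ^ (n + 1)) := by
    have := (summable_geometric_of_lt_one (by norm_num) (by norm_num : (1/2:ℝ) < 1)).mul_left (1/2 : ℝ)
    exact this.congr (fun n => by rw [pow_succ]; ring)
  have hfle : ∀ n : ℕ, f n ≤ (1/2 : ℝ) ^ (n + 1) := by
    intro n
    show (2 : ℝ) ^ (-((n : ℤ) + 1)) * _ ≤ _
    rw [hzp n]
    calc (1/2 : ℝ) ^ (n + 1) * min _ 1 ≤ (1/2 : ℝ) ^ (n + 1) * 1 :=
          mul_le_mul_of_nonneg_left (min_le_right _ _) (by positivity)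
      _ = (1/2 : ℝ) ^ (n + 1) := by ring
  have hfnn : ∀ n : ℕ, 0 ≤ f n := by
    intro n
    show 0 ≤ (2 : ℝ) ^ (-((n : ℤ) + 1)) * _
    rw [hzp n]; exact mul_nonneg (by positivity) (hS0 n)
  have hsum : Summable f := Summable.of_nonneg_of_le hfnn hfle hg
  set N : ℕ := ⌈τ⌉₊ + 2 with hN
  have hNge : τ + 2 ≤ (N : ℝ) := by
    have := Nat.le_ceil τ
    push_cast [hN]; linarith
  have hNle : (N : ℝ) ≤ τ + 3 := by
    have := Nat.ceil_lt_add_one hτ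
    push_cast [hN]; linarith
  have hpos : (0:ℝ) < (2:ℝ) ^ (-τ) := Real.rpow_pos_of_pos two_pos _
  have hhead : ∑ i ∈ Finset.range N, f i ≤ (2:ℝ) ^ (-τ) / 2 := by
    have hterm : ∀ i ∈ Finset.range N, f i ≤ (1/2 : ℝ) ^ (i + 1) * ((2:ℝ) ^ (-τ) / 2) := by
      intro i hi
      rw [Finset.mem_range] at hi
      have hi' : (i : ℝ) + 1 ≤ (N : ℝ) := by exact_mod_cast Nat.succ_le_of_lt hi
      have hSle : sSup ((fun x => |gammaStream t₁ x - gammaStream t₂ x|) ''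
          Set.Icc (1 : ℝ) ((i : ℝ) + 1)) ≤ (2:ℝ) ^ (-τ) / 2 := by
        apply Real.sSup_le _ (by positivity)
        rintro y ⟨x, hx, rfl⟩
        exact key_est' τ x t₁ t₂ hτ hx.1 (by linarith [hx.2]) h1 h2
      show (2 : ℝ) ^ (-((i : ℤ) + 1)) * _ ≤ _
      rw [hzp i]
      exact mul_le_mul_of_nonneg_left (le_trans (min_le_left _ _) hSle) (by positivity)
    have hgs : ∑ i ∈ Finset.range N, (1/2 : ℝ) ^ (i + 1) ≤ 1 := by
      have hge := geom_sum_eq (by norm_num : (1/2:ℝ) ≠ 1) N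
      have hpw : (0:ℝ) ≤ (1/2 : ℝ) ^ N := by positivity
      calc ∑ i ∈ Finset.range N, (1/2:ℝ) ^ (i+1)
          = (∑ i ∈ Finset.range N, (1/2:ℝ) ^ i) * (1/2) := by
            rw [Finset.sum_mul]; exact Finset.sum_congr rfl (fun i _ => by rw [pow_succ])
        _ = (((1/2:ℝ) ^ N - 1) / ((1/2) - 1)) * (1/2) := by rw [hge]
        _ = 1 - (1/2:ℝ) ^ N := by ring
        _ ≤ 1 := by linarith
    calc ∑ i ∈ Finset.range N, f i
        ≤ ∑ i ∈ Finset.range N, (1/2 : ℝ) ^ (i + 1) * ((2:ℝ) ^ (-τ) / 2) :=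
          Finset.sum_le_sum hterm
      _ = (∑ i ∈ Finset.range N, (1/2 : ℝ) ^ (i + 1)) * ((2:ℝ) ^ (-τ) / 2) := by
          rw [Finset.sum_mul]
      _ ≤ 1 * ((2:ℝ) ^ (-τ) / 2) := by
          exact mul_le_mul_of_nonneg_right hgs (by positivity)
      _ = (2:ℝ) ^ (-τ) / 2 := by ring
  have htail : ∑' i : ℕ, f (i + N) ≤ (2:ℝ) ^ (-τ) / 4 := by
    have hgsum : Summable (fun i : ℕ => (1/2:ℝ) ^ (i + N + 1)) := by
      have := (summable_geometric_of_lt_one (by norm_num) (by norm_num : (1/2:ℝ) < 1)).mul_left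
        ((1/2 : ℝ) ^ (N + 1))
      exact this.congr (fun i => by rw [← pow_add]; ring_nf)
    have hle : ∑' i : ℕ, f (i + N) ≤ ∑' i : ℕ, (1/2:ℝ) ^ (i + N + 1) :=
      Summable.tsum_le_tsum (fun i => hfle (i + N)) (hsum.comp_injective (add_left_injective N)) hgsum
    have heq : ∑' i : ℕ, (1/2:ℝ) ^ (i + N + 1) = (1/2:ℝ) ^ N := by
      calc ∑' i : ℕ, (1/2:ℝ) ^ (i + N + 1)
          = ∑' i : ℕ, (1/2:ℝ) ^ (N + 1) * (1/2:ℝ) ^ i := by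
            exact tsum_congr (fun i => by rw [← pow_add]; ring_nf)
        _ = (1/2:ℝ) ^ (N + 1) * ∑' i : ℕ, (1/2:ℝ) ^ i := tsum_mul_left
        _ = (1/2:ℝ) ^ (N + 1) * 2 := by
            rw [tsum_geometric_of_lt_one (by norm_num) (by norm_num : (1/2:ℝ) < 1)]; norm_num
        _ = (1/2:ℝ) ^ N := by rw [pow_succ]; ring
    have hNbd : (1/2:ℝ) ^ N ≤ (2:ℝ) ^ (-τ) / 4 := by
      have e1 : ((1/2:ℝ)) ^ N = (2:ℝ) ^ (-(N:ℝ)) := by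
        rw [one_div, inv_pow, ← Real.rpow_natCast 2 N, ← Real.rpow_neg (by norm_num : (0:ℝ) ≤ 2)]
      have e2 : (2:ℝ) ^ (-(N:ℝ)) ≤ (2:ℝ) ^ (-(τ + 2)) :=
        Real.rpow_le_rpow_of_exponent_le one_le_two (by linarith)
      have e3 : (2:ℝ) ^ (-(τ + 2)) = (2:ℝ) ^ (-τ) / 4 := by
        rw [show -(τ + 2) = -τ + (-2) by ring, Real.rpow_add two_pos,
          show ((2:ℝ) ^ (-2:ℝ)) = 1/4 by
            rw [show (-2:ℝ) = ((-2:ℤ):ℝ) by norm_num, Real.rpow_intCast]; norm_num]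
        ring
      rw [e1]; linarith [e3 ▸ e2]
    linarith [heq ▸ hle]
  have hsplit := Summable.sum_add_tsum_nat_add N hsum
  have : ∑' n : ℕ, f n ≤ (2:ℝ) ^ (-τ) / 2 + (2:ℝ) ^ (-τ) / 4 := by
    rw [← hsplit]; exact add_le_add hhead htail
  linarith
end

section
/- Let g ∈ ℝ and let v : ℝ → ℝ be differentiable with continuous derivative v'. Define u(t) = g · exp(v(t) − v(0)). Then: (i) for every t ≥ 0, u(t) = g + ∫₀^t u(s) · v'(s) ds; and (ii) if w : ℝ → ℝ is continuous and satisfies w(t) = g + ∫₀^t w(s) · v'(s) ds for all t ≥ 0, then w(t) = u(t) for all t ≥ 0. -/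
/-- With `v` differentiable with continuous derivative, the
function `u(t) = g·exp(v(t) − v(0))` satisfies the integrator fixed-point
equation `u(t) = g + ∫₀ᵗ u(s)·v'(s) ds` for all `t ≥ 0`, and it is the unique
continuous solution of this equation on `[0,∞)`. -/
theorem integrator_fixed_point (g : ℝ) (v : ℝ → ℝ)
    (hv : Differentiable ℝ v) (hv' : Continuous (deriv v))
    (u : ℝ → ℝ) (hu : ∀ t : ℝ, u t = g * Real.exp (v t - v 0)) :
    (∀ t : ℝ, 0 ≤ t → u t = g + ∫ s in (0 : ℝ)..t, u s * deriv v s) ∧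
    (∀ w : ℝ → ℝ, Continuous w →
      (∀ t : ℝ, 0 ≤ t → w t = g + ∫ s in (0 : ℝ)..t, w s * deriv v s) →
      ∀ t : ℝ, 0 ≤ t → w t = u t) := by
  have hu' : u = fun t => g * Real.exp (v t - v 0) := funext hu
  subst hu'
  have hcontu : Continuous fun t => g * Real.exp (v t - v 0) := by
    exact continuous_const.mul (Real.continuous_exp.comp (hv.continuous.sub continuous_const))
  have hderiv : ∀ s : ℝ,
      HasDerivAt (fun t => g * Real.exp (v t - v 0))
        (g * Real.exp (v s - v 0) * deriv v s) s := by
    intro s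
    have h3 : HasDerivAt (fun t => Real.exp (v t - v 0))
        (Real.exp (v s - v 0) * deriv v s) s := ((hv s).hasDerivAt.sub_const _).exp
    have h4 := h3.const_mul g
    exact h4.congr_deriv (by ring)
  have hint : ∀ t : ℝ, (∫ s in (0 : ℝ)..t,
      (g * Real.exp (v s - v 0)) * deriv v s) = g * Real.exp (v t - v 0) - g := by
    intro t
    have := intervalIntegral.integral_eq_sub_of_hasDerivAt
      (f := fun t => g * Real.exp (v t - v 0))
      (f' := fun s => g * Real.exp (v s - v 0) * deriv v s)
      (a := 0) (b := t) (fun s _ => hderiv s)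
      (((hcontu.mul hv').intervalIntegrable 0 t))
    simpa using this
  constructor
  · intro t _
    rw [hint t]; ring
  · intro w hw hwfix t ht
    set W : ℝ → ℝ := fun t => g + ∫ s in (0 : ℝ)..t, w s * deriv v s with hW
    have hWderiv : ∀ s : ℝ, HasDerivAt W (w s * deriv v s) s := by
      intro s
      exact (((hw.mul hv').integral_hasStrictDerivAt 0 s).hasDerivAt).const_add g
    set φ : ℝ → ℝ := fun t => (W t - g * Real.exp (v t - v 0)) * Real.exp (v 0 - v t)
      with hφ
    have hφderiv : ∀ s : ℝ, 0 ≤ s → HasDerivAt φ 0 s := by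
      intro s hs
      have hws : w s = W s := hwfix s hs
      have h1 : HasDerivAt (fun t => W t - g * Real.exp (v t - v 0))
          (w s * deriv v s - g * Real.exp (v s - v 0) * deriv v s) s :=
        (hWderiv s).sub (hderiv s)
      have h2 : HasDerivAt (fun t => Real.exp (v 0 - v t))
          (Real.exp (v 0 - v s) * (-deriv v s)) s := by
        exact (((hv s).hasDerivAt.const_sub (v 0)).exp).congr_deriv (by ring)
      have h3 := h1.mul h2
      exact h3.congr_deriv (by rw [hws]; ring)
    have hφ0 : φ 0 = 0 := by
      simp [hφ, hW]
    have hφconst : ∀ x ∈ Set.Icc (0 : ℝ) t, φ x = 0 := by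
      intro x hx
      have := eq_of_has_deriv_right_eq (a := 0) (b := t)
        (f := φ) (g := fun _ => (0 : ℝ)) (f' := fun _ => (0 : ℝ))
        (fun y hy => (hφderiv y hy.1).hasDerivWithinAt)
        (fun y _ => (hasDerivAt_const y (0 : ℝ)).hasDerivWithinAt)
        (by
          have hWc : Continuous W :=
            continuous_iff_continuousAt.mpr fun s => (hWderiv s).continuousAt
          have : Continuous φ := by
            apply Continuous.mul
            · exact hWc.sub hcontu
            · exact Real.continuous_exp.comp (continuous_const.sub hv.continuous)
          exact this.continuousOn)
        continuousOn_const (by simpa using hφ0)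
      exact this x hx
    have hx := hφconst t ⟨le_refl 0 |>.trans ht, le_refl t⟩
    have hexp : Real.exp (v 0 - v t) ≠ 0 := Real.exp_ne_zero _
    have : W t - g * Real.exp (v t - v 0) = 0 := by
      rcases mul_eq_zero.mp hx with h | h
      · exact h
      · exact absurd h hexp
    have hWt : W t = g * Real.exp (v t - v 0) := by linarith
    rw [hwfix t ht]
    exact hWt
end

section
/- Define ζ₁(t,x) = 2^x/(x−1) − 2^x · ∫₀^t sin(x·arctan s) · (1+s²)^{-x/2} · e^{-π·s−1} ds for t ≥ 0 and real x ≥ 2 (real powers). Then for every real τ ≥ 0 and all t₁, t₂ ≥ τ, one has Σ_{n=2}^∞ 2^{-n} · min( sup_{x ∈ [2,n]} |ζ₁(t₁,x) − ζ₁(t₂,x)| , 1 ) < 2^{-τ}. -/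
open Real

/-- `ζ₁(t,x) = 2^x/(x−1) − 2^x·∫₀ᵗ sin(x·arctan s)·(1+s²)^{-x/2}·e^{-πs−1} ds`. -/
noncomputable def zeta1 (t x : ℝ) : ℝ :=
  (2 : ℝ) ^ x / (x - 1) -
    (2 : ℝ) ^ x * ∫ s in (0 : ℝ)..t,
      Real.sin (x * Real.arctan s) * (1 + s ^ 2) ^ (-(x / 2)) *
        Real.exp (-(Real.pi * s) - 1)

noncomputable def f (x s : ℝ) : ℝ :=
  Real.sin (x * Real.arctan s) * (1 + s ^ 2) ^ (-(x / 2)) * Real.exp (-(Real.pi * s) - 1)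

lemma f_cont (x : ℝ) : Continuous (f x) := by
  apply Continuous.mul
  apply Continuous.mul
  · exact Real.continuous_sin.comp (continuous_const.mul Real.continuous_arctan)
  · exact Continuous.rpow_const (by continuity) (fun s => Or.inl (by positivity))
  · exact Real.continuous_exp.comp (by continuity)

lemma abs_f_le (x s : ℝ) (hx : 0 ≤ x) : |f x s| ≤ Real.exp (-(Real.pi * s) - 1) := by
  have h1 : |Real.sin (x * Real.arctan s)| ≤ 1 := Real.abs_sin_le_one _
  have hb : (1:ℝ) ≤ 1 + s ^ 2 := by nlinarith [sq_nonneg s]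
  have h2 : (1 + s ^ 2) ^ (-(x / 2)) ≤ 1 :=
    Real.rpow_le_one_of_one_le_of_nonpos hb (by linarith)
  have h2' : (0:ℝ) ≤ (1 + s ^ 2) ^ (-(x / 2)) := Real.rpow_nonneg (by linarith) _
  have he : (0:ℝ) < Real.exp (-(Real.pi * s) - 1) := Real.exp_pos _
  unfold f
  rw [abs_mul, abs_mul, abs_of_nonneg h2', abs_of_pos he]
  calc |Real.sin (x * Real.arctan s)| * (1 + s ^ 2) ^ (-(x / 2)) * Real.exp (-(Real.pi * s) - 1)
      ≤ 1 * 1 * Real.exp (-(Real.pi * s) - 1) := by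
        apply mul_le_mul_of_nonneg_right _ he.le
        exact mul_le_mul h1 h2 h2' zero_le_one
    _ = Real.exp (-(Real.pi * s) - 1) := by ring

lemma exp_integral (a b : ℝ) :
    ∫ s in a..b, Real.exp (-(Real.pi * s) - 1)
      = Real.exp (-(Real.pi * a) - 1) / Real.pi - Real.exp (-(Real.pi * b) - 1) / Real.pi := by
  have hd : ∀ s : ℝ, HasDerivAt (fun u => -(Real.exp (-(Real.pi * u) - 1)) / Real.pi)
      (Real.exp (-(Real.pi * s) - 1)) s := by
    intro s
    have h1 : HasDerivAt (fun u : ℝ => -(Real.pi * u) - 1) (-Real.pi) s := by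
      simpa using (((hasDerivAt_id s).const_mul Real.pi).neg.sub_const 1)
    have h2 := (h1.exp).neg.div_const Real.pi
    refine h2.congr_deriv ?_
    rw [div_eq_iff Real.pi_pos.ne']; ring
  have := intervalIntegral.integral_eq_sub_of_hasDerivAt (f := fun u => -(Real.exp (-(Real.pi * u) - 1)) / Real.pi)
    (fun s _ => hd s) ((Real.continuous_exp.comp (by continuity)).intervalIntegrable a b)
  rw [this]; ring

lemma int_bound_le {τ a b x : ℝ} (hx : 0 ≤ x) (hτ : τ ≤ a) (hab : a ≤ b) :
    |∫ s in a..b, f x s| ≤ Real.exp (-(Real.pi * τ) - 1) / Real.pi := by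
  have h1 : |∫ s in a..b, f x s| ≤ ∫ s in a..b, |f x s| := by
    simpa using intervalIntegral.abs_integral_le_integral_abs hab (f := f x)
  have h2 : (∫ s in a..b, |f x s|) ≤ ∫ s in a..b, Real.exp (-(Real.pi * s) - 1) := by
    apply intervalIntegral.integral_mono_on hab
    · exact ((f_cont x).abs).intervalIntegrable a b
    · exact (Real.continuous_exp.comp (by continuity)).intervalIntegrable a b
    · exact fun s _ => abs_f_le x s hx
  have h3 : (∫ s in a..b, Real.exp (-(Real.pi * s) - 1))
      ≤ Real.exp (-(Real.pi * τ) - 1) / Real.pi := by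
    rw [exp_integral]
    have e1 : Real.exp (-(Real.pi * a) - 1) ≤ Real.exp (-(Real.pi * τ) - 1) := by
      apply Real.exp_le_exp.2
      nlinarith [Real.pi_pos]
    have e2 : (0:ℝ) < Real.exp (-(Real.pi * b) - 1) := Real.exp_pos _
    have := Real.pi_pos
    rw [div_sub_div_same]
    gcongr
    linarith
  linarith

lemma int_bound {τ a b x : ℝ} (hx : 0 ≤ x) (ha : τ ≤ a) (hb : τ ≤ b) :
    |∫ s in a..b, f x s| ≤ Real.exp (-(Real.pi * τ) - 1) / Real.pi := by
  rcases le_total a b with h | h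
  · exact int_bound_le hx ha h
  · rw [intervalIntegral.integral_symm, abs_neg]
    exact int_bound_le hx hb h

lemma diff_eq (a b x : ℝ) :
    zeta1 a x - zeta1 b x = (2:ℝ) ^ x * ∫ s in a..b, f x s := by
  have h : (∫ s in (0:ℝ)..a, f x s) + ∫ s in a..b, f x s = ∫ s in (0:ℝ)..b, f x s :=
    intervalIntegral.integral_add_adjacent_intervals
      ((f_cont x).intervalIntegrable 0 a) ((f_cont x).intervalIntegrable a b)
  unfold zeta1 f at *
  rw [← h]
  ring

lemma diff_bound {τ a b x : ℝ} (hx : 0 ≤ x) (ha : τ ≤ a) (hb : τ ≤ b) :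
    |zeta1 a x - zeta1 b x| ≤ (2:ℝ) ^ x * (Real.exp (-(Real.pi * τ) - 1) / Real.pi) := by
  rw [diff_eq, abs_mul, abs_of_pos (Real.rpow_pos_of_pos two_pos x)]
  exact mul_le_mul_of_nonneg_left (int_bound hx ha hb) (Real.rpow_pos_of_pos two_pos x).le

/-- `ζ₁` is an id-convergent Cauchy stream: for all `τ ≥ 0` and
`t₁, t₂ ≥ τ`, `Σ_{n≥2} 2^{-n}·min(sup_{x∈[2,n]} |ζ₁(t₁,x) − ζ₁(t₂,x)|, 1) < 2^{-τ}`. -/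
theorem zeta1_id_convergent (τ : ℝ) (hτ : 0 ≤ τ)
    (t₁ t₂ : ℝ) (ht₁ : τ ≤ t₁) (ht₂ : τ ≤ t₂) :
    (∑' n : ℕ, (2 : ℝ) ^ (-((n : ℤ) + 2)) *
      min (sSup ((fun x => |zeta1 t₁ x - zeta1 t₂ x|) ''
        Set.Icc (2 : ℝ) ((n : ℝ) + 2))) 1) < (2 : ℝ) ^ (-τ) := by
  set C : ℝ := Real.exp (-(Real.pi * τ) - 1) / Real.pi with hCdef
  have hC : 0 ≤ C := div_nonneg (Real.exp_pos _).le Real.pi_pos.le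
  set q : ℝ := (Real.sqrt 2)⁻¹ with hqdef
  have hs2 : (7:ℝ)/5 ≤ Real.sqrt 2 := by
    rw [show (7:ℝ)/5 = Real.sqrt ((7/5)^2) by rw [Real.sqrt_sq (by norm_num)]]
    exact Real.sqrt_le_sqrt (by norm_num)
  have hq0 : 0 ≤ q := inv_nonneg.2 (Real.sqrt_nonneg 2)
  have hq57 : q ≤ 5/7 := by
    rw [hqdef, show (5:ℝ)/7 = ((7:ℝ)/5)⁻¹ by norm_num]
    exact inv_anti₀ (by norm_num) hs2
  have hq1 : q < 1 := lt_of_le_of_lt hq57 (by norm_num)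
  -- the termwise bound
  have key : ∀ n : ℕ, (2 : ℝ) ^ (-((n : ℤ) + 2)) *
      min (sSup ((fun x => |zeta1 t₁ x - zeta1 t₂ x|) ''
        Set.Icc (2 : ℝ) ((n : ℝ) + 2))) 1 ≤ Real.sqrt C * q ^ (n + 2) := by
    intro n
    set S := ((fun x => |zeta1 t₁ x - zeta1 t₂ x|) '' Set.Icc (2 : ℝ) ((n : ℝ) + 2))
    set B : ℝ := (2:ℝ) ^ ((n:ℝ) + 2) * C with hBdef
    have hB0 : 0 ≤ B := mul_nonneg (Real.rpow_nonneg (by norm_num) _) hC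
    have hmemB : ∀ y ∈ S, y ≤ B := by
      rintro y ⟨x, hx, rfl⟩
      have hx0 : (0:ℝ) ≤ x := le_trans (by norm_num) hx.1
      calc |zeta1 t₁ x - zeta1 t₂ x| ≤ (2:ℝ) ^ x * C := diff_bound hx0 ht₁ ht₂
        _ ≤ B := mul_le_mul_of_nonneg_right
            (Real.rpow_le_rpow_of_exponent_le one_le_two hx.2) hC
    have hsup : sSup S ≤ B := Real.sSup_le hmemB hB0
    have hmin : min B 1 ≤ Real.sqrt B := by
      have hm0 : 0 ≤ min B 1 := le_min hB0 zero_le_one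
      have hsq : (min B 1) ^ 2 ≤ B := by
        calc (min B 1) ^ 2 = min B 1 * min B 1 := sq (min B 1)
          _ ≤ B * 1 := mul_le_mul (min_le_left _ _) (min_le_right _ _) hm0 hB0
          _ = B := mul_one B
      exact (Real.le_sqrt hm0 hB0).2 hsq
    have hsqrtB : Real.sqrt B = (2:ℝ) ^ (((n:ℝ) + 2) / 2) * Real.sqrt C := by
      rw [hBdef, Real.sqrt_mul (Real.rpow_nonneg (by norm_num) _) C]
      congr 1
      rw [Real.sqrt_eq_rpow, ← Real.rpow_mul (by norm_num : (0:ℝ) ≤ 2)]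
      congr 1
      ring
    have hz : ((2:ℝ) ^ (-((n : ℤ) + 2)) : ℝ) = (2:ℝ) ^ ((-((n:ℝ) + 2)) : ℝ) := by
      rw [← Real.rpow_intCast 2 (-((n:ℤ)+2))]
      push_cast
      ring_nf
    have hqpow : q ^ (n + 2) = (2:ℝ) ^ ((-(((n:ℝ) + 2) / 2)) : ℝ) := by
      rw [hqdef, Real.sqrt_eq_rpow, ← Real.rpow_neg (by norm_num : (0:ℝ) ≤ 2),
        ← Real.rpow_natCast ((2:ℝ) ^ ((-(1/2) : ℝ))) (n + 2),
        ← Real.rpow_mul (by norm_num : (0:ℝ) ≤ 2)]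
      congr 1
      push_cast
      ring
    calc (2 : ℝ) ^ (-((n : ℤ) + 2)) * min (sSup S) 1
        ≤ (2:ℝ) ^ ((-((n:ℝ) + 2)) : ℝ) * ((2:ℝ) ^ (((n:ℝ) + 2) / 2) * Real.sqrt C) := by
          rw [hz]
          exact mul_le_mul_of_nonneg_left
            (((min_le_min hsup le_rfl).trans hmin).trans_eq hsqrtB)
            (Real.rpow_nonneg (by norm_num) _)
      _ = Real.sqrt C * q ^ (n + 2) := by
          rw [hqpow, ← mul_assoc, ← Real.rpow_add (by norm_num : (0:ℝ) < 2)]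
          rw [show -((n:ℝ) + 2) + ((n:ℝ) + 2) / 2 = -(((n:ℝ) + 2) / 2) by ring]
          ring
  -- nonnegativity of terms
  have hnn : ∀ n : ℕ, 0 ≤ (2 : ℝ) ^ (-((n : ℤ) + 2)) *
      min (sSup ((fun x => |zeta1 t₁ x - zeta1 t₂ x|) ''
        Set.Icc (2 : ℝ) ((n : ℝ) + 2))) 1 := by
    intro n
    apply mul_nonneg (zpow_nonneg (by norm_num) _)
    apply le_min _ zero_le_one
    have h2le : (2:ℝ) ≤ (n:ℝ) + 2 := by
      have : (0:ℝ) ≤ (n:ℝ) := Nat.cast_nonneg n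
      linarith
    have hmem : |zeta1 t₁ 2 - zeta1 t₂ 2| ∈
        ((fun x => |zeta1 t₁ x - zeta1 t₂ x|) '' Set.Icc (2 : ℝ) ((n : ℝ) + 2)) :=
      ⟨2, ⟨le_refl _, h2le⟩, rfl⟩
    have hbdd : BddAbove ((fun x => |zeta1 t₁ x - zeta1 t₂ x|) ''
        Set.Icc (2 : ℝ) ((n : ℝ) + 2)) := by
      refine ⟨(2:ℝ) ^ ((n:ℝ) + 2) * C, ?_⟩
      rintro y ⟨x, hx, rfl⟩
      have hx0 : (0:ℝ) ≤ x := le_trans (by norm_num) hx.1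
      calc |zeta1 t₁ x - zeta1 t₂ x| ≤ (2:ℝ) ^ x * C := diff_bound hx0 ht₁ ht₂
        _ ≤ _ := mul_le_mul_of_nonneg_right
            (Real.rpow_le_rpow_of_exponent_le one_le_two hx.2) hC
    exact le_trans (abs_nonneg _) (le_csSup hbdd hmem)
  -- geometric majorant
  have hgsummable : Summable (fun n : ℕ => Real.sqrt C * q ^ (n + 2)) := by
    have : Summable (fun n : ℕ => q ^ n) := summable_geometric_of_lt_one hq0 hq1
    exact (this.mul_left (Real.sqrt C * q ^ 2)).congr (fun n => by ring)
  have hsummable : Summable (fun n : ℕ => (2 : ℝ) ^ (-((n : ℤ) + 2)) *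
      min (sSup ((fun x => |zeta1 t₁ x - zeta1 t₂ x|) ''
        Set.Icc (2 : ℝ) ((n : ℝ) + 2))) 1) :=
    Summable.of_nonneg_of_le hnn key hgsummable
  have hle := Summable.tsum_le_tsum key hsummable hgsummable
  have hgsum : (∑' n : ℕ, Real.sqrt C * q ^ (n + 2))
      = Real.sqrt C * q ^ 2 * (1 - q)⁻¹ := by
    rw [show (fun n : ℕ => Real.sqrt C * q ^ (n + 2))
        = (fun n : ℕ => (Real.sqrt C * q ^ 2) * q ^ n) by funext n; ring]
    rw [tsum_mul_left, tsum_geometric_of_lt_one hq0 hq1]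
  -- final numeric bound
  have hfin : Real.sqrt C * q ^ 2 * (1 - q)⁻¹ < (2:ℝ) ^ (-τ) := by
    have hq2 : q ^ 2 = 1/2 := by
      rw [hqdef, ← Real.sqrt_inv, Real.sq_sqrt (by norm_num : (0:ℝ) ≤ 2⁻¹)]
      norm_num
    have hsqC : Real.sqrt C
        = Real.exp (-(Real.pi * τ) / 2) * Real.exp (-(1/2) : ℝ) / Real.sqrt Real.pi := by
      rw [hCdef, Real.sqrt_div (Real.exp_pos _).le]
      congr 1
      have hx : Real.exp (-(Real.pi * τ) - 1)
          = (Real.exp (-(Real.pi * τ) / 2) * Real.exp (-(1/2) : ℝ)) ^ 2 := by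
        rw [sq, ← Real.exp_add, ← Real.exp_add]
        congr 1
        ring
      rw [hx, Real.sqrt_sq (by positivity)]
    have hK : Real.exp (-(1/2) : ℝ) / Real.sqrt Real.pi * (1/2) * (1 - q)⁻¹ < 1 := by
      have he : Real.exp (-(1/2) : ℝ) ≤ 2/3 := by
        rw [Real.exp_neg]
        have h32 : (3:ℝ)/2 ≤ Real.exp (1/2) := by
          have := Real.add_one_le_exp (1/2 : ℝ)
          linarith
        calc (Real.exp (1/2 : ℝ))⁻¹ ≤ ((3:ℝ)/2)⁻¹ := inv_anti₀ (by norm_num) h32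
          _ = 2/3 := by norm_num
      have hp : (17:ℝ)/10 ≤ Real.sqrt Real.pi := by
        rw [show (17:ℝ)/10 = Real.sqrt ((17/10)^2) from (Real.sqrt_sq (by norm_num)).symm]
        apply Real.sqrt_le_sqrt
        nlinarith [Real.pi_gt_three]
      have hsp : (0:ℝ) < Real.sqrt Real.pi := lt_of_lt_of_le (by norm_num) hp
      have hiq : (1 - q)⁻¹ ≤ 7/2 := by
        have h1 : (2:ℝ)/7 ≤ 1 - q := by linarith
        calc (1 - q)⁻¹ ≤ ((2:ℝ)/7)⁻¹ := inv_anti₀ (by norm_num) h1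
          _ = 7/2 := by norm_num
      have hiq0 : (0:ℝ) ≤ (1 - q)⁻¹ := inv_nonneg.2 (by linarith)
      have he0 : (0:ℝ) ≤ Real.exp (-(1/2) : ℝ) := (Real.exp_pos _).le
      calc Real.exp (-(1/2) : ℝ) / Real.sqrt Real.pi * (1/2) * (1 - q)⁻¹
          ≤ ((2:ℝ)/3) / ((17:ℝ)/10) * (1/2) * (7/2) := by
            gcongr
          _ < 1 := by norm_num
    have h2τ : Real.exp (-(Real.pi * τ) / 2) ≤ (2:ℝ) ^ (-τ) := by
      rw [Real.rpow_def_of_pos (by norm_num : (0:ℝ) < 2)]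
      apply Real.exp_le_exp.2
      have hl2 : Real.log 2 < 0.6931471808 := Real.log_two_lt_d9
      nlinarith [Real.pi_gt_three]
    calc Real.sqrt C * q ^ 2 * (1 - q)⁻¹
        = Real.exp (-(Real.pi * τ) / 2) *
            (Real.exp (-(1/2) : ℝ) / Real.sqrt Real.pi * (1/2) * (1 - q)⁻¹) := by
          rw [hsqC, hq2]; ring
      _ < Real.exp (-(Real.pi * τ) / 2) * 1 := by
          exact mul_lt_mul_of_pos_left hK (Real.exp_pos _)
      _ = Real.exp (-(Real.pi * τ) / 2) := mul_one _
      _ ≤ (2:ℝ) ^ (-τ) := h2τ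
  calc _ ≤ _ := hle
    _ = Real.sqrt C * q ^ 2 * (1 - q)⁻¹ := hgsum
    _ < (2:ℝ) ^ (-τ) := hfin
end
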